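/- Let α and β be partitions with at most d parts and let □ = (ℓ)^d be a rectangular partition with d parts containing β (i.e., ℓ ≥ β_1). Then in the ring of symmetric polynomials in d variables t_1,…,t_d, the product of Schur polynomials satisfies s_α(t_1,…,t_d)·s_β(t_1,…,t_d) = s_{(□+α)/(□−β^←)}(t_1,…,t_d), where β^← = (β_d,…,β_1) is the reversal of β, □+α = (ℓ+α_1,…,ℓ+α_d), and □−β^← = (ℓ−β_d,…,ℓ−β_1). -/

import Mathlib

open MvPolynomial

/-- The cells of the skew shape `lam/mu` with at most `d` rows (0-indexed). -/
def shapeCells (d : ℕ) (lam mu : Fin d → ℕ) : Finset (Fin d × ℕ) :=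
  (Finset.univ ×ˢ Finset.range (Finset.univ.sup lam)).filter
    (fun p => mu p.1 ≤ p.2 ∧ p.2 < lam p.1)

/-- Semistandardness of a filling of the cells of `lam/mu` with values in `Fin d`
(the value `v : Fin d` represents the entry `v+1 ∈ {1,…,d}`): rows weakly increase and
columns strictly increase. -/
def IsSSYT (d : ℕ) (lam mu : Fin d → ℕ) (T : shapeCells d lam mu → Fin d) : Prop :=
  (∀ c c' : shapeCells d lam mu, (c : Fin d × ℕ).1 = (c' : Fin d × ℕ).1 →
      (c : Fin d × ℕ).2 ≤ (c' : Fin d × ℕ).2 → T c ≤ T c') ∧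
  (∀ c c' : shapeCells d lam mu, ((c' : Fin d × ℕ).1 : ℕ) = ((c : Fin d × ℕ).1 : ℕ) + 1 →
      (c : Fin d × ℕ).2 = (c' : Fin d × ℕ).2 → T c < T c')

open scoped Classical in
/-- The skew Schur polynomial `s_{lam/mu}(t_0,…,t_{d-1})`, as the generating polynomial of
semistandard skew tableaux of shape `lam/mu` with entries in `{1,…,d}`. -/
noncomputable def skewSchur (d : ℕ) (lam mu : Fin d → ℕ) : MvPolynomial (Fin d) ℤ :=
  ∑ T ∈ Finset.univ.filter (IsSSYT d lam mu), ∏ c : shapeCells d lam mu, X (T c)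

/-- The number of entries of the tableau `T` equal to `v`. -/
noncomputable def entryCount (d : ℕ) (lam mu : Fin d → ℕ)
    (T : shapeCells d lam mu → Fin d) (v : Fin d) : ℕ :=
  (Finset.univ.filter (fun c : shapeCells d lam mu => T c = v)).card


open scoped Classical
open Finset


open scoped Classical
open Finset

lemma mem_shapeCells {d : ℕ} {lam mu : Fin d → ℕ} {p : Fin d × ℕ} :
    p ∈ shapeCells d lam mu ↔ mu p.1 ≤ p.2 ∧ p.2 < lam p.1 := by
  simp only [shapeCells, mem_filter, mem_product, mem_univ, true_and, mem_range]
  constructor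
  · tauto
  · intro h
    exact ⟨lt_of_lt_of_le h.2 (Finset.le_sup (mem_univ p.1)), h⟩

section Basics

variable {d : ℕ} {lam mu : Fin d → ℕ}

/-- columns of entries `< v` in row `i` start at `mu i`; `pos T v i` is where they end. -/
noncomputable def pos (T : shapeCells d lam mu → Fin d) (v i : ℕ) : ℕ :=
  (if h : i < d then mu ⟨i, h⟩ else 0) +
    (Finset.univ.filter fun c : shapeCells d lam mu => ((c : Fin d × ℕ).1 : ℕ) = i ∧ ((T c : ℕ) < v)).card

lemma muN_le_pos (T : shapeCells d lam mu → Fin d) (v : ℕ) (i : Fin d) :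
    mu i ≤ pos T v i := by
  simp [pos, i.isLt]

lemma pos_mono (T : shapeCells d lam mu → Fin d) {v w : ℕ} (h : v ≤ w) (i : ℕ) :
    pos T v i ≤ pos T w i := by
  unfold pos
  gcongr

/-- counting cells of row `i` with column in `[a, b)`. -/
lemma card_row_cols {i : Fin d} {a b : ℕ} (ha : mu i ≤ a) (hb : b ≤ lam i) :
    (Finset.univ.filter fun c : shapeCells d lam mu =>
      ((c : Fin d × ℕ).1 : ℕ) = (i : ℕ) ∧ a ≤ (c : Fin d × ℕ).2 ∧ (c : Fin d × ℕ).2 < b).card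
      = b - a := by
  rw [← Nat.card_Ico a b]
  refine Finset.card_nbij (fun c => (c : Fin d × ℕ).2) ?_ ?_ ?_
  · intro c hc
    simp only [mem_coe, mem_filter, mem_univ, true_and] at hc
    exact Finset.mem_Ico.2 ⟨hc.2.1, hc.2.2⟩
  · intro c hc c' hc' h
    simp only [mem_coe, mem_filter, mem_univ, true_and] at hc hc'
    have : (c : Fin d × ℕ) = (c' : Fin d × ℕ) := by
      apply Prod.ext
      · exact Fin.ext (hc.1.trans hc'.1.symm)
      · exact h
    exact Subtype.ext this
  · intro j hj
    simp only [mem_coe, Finset.mem_Ico] at hj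
    have hcell : ((i, j) : Fin d × ℕ) ∈ shapeCells d lam mu :=
      mem_shapeCells.2 ⟨le_trans ha hj.1, lt_of_lt_of_le hj.2 hb⟩
    refine ⟨⟨(i, j), hcell⟩, ?_, rfl⟩
    exact mem_coe.2 (mem_filter.2 ⟨mem_univ _, rfl, hj.1, hj.2⟩)

end Basics

section Prefix

variable {d : ℕ} {lam mu : Fin d → ℕ} {T : shapeCells d lam mu → Fin d}

lemma pos_le_lam (T : shapeCells d lam mu → Fin d) (v : ℕ) (i : Fin d) (hml : mu i ≤ lam i) :
    pos T v (i : ℕ) ≤ lam i := by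
  have hsub : (Finset.univ.filter fun c : shapeCells d lam mu =>
      ((c : Fin d × ℕ).1 : ℕ) = (i : ℕ) ∧ ((T c : ℕ) < v)) ⊆
      (Finset.univ.filter fun c : shapeCells d lam mu =>
      ((c : Fin d × ℕ).1 : ℕ) = (i : ℕ) ∧ mu i ≤ (c : Fin d × ℕ).2 ∧ (c : Fin d × ℕ).2 < lam i) := by
    intro c hc
    simp only [mem_filter, mem_univ, true_and] at hc ⊢
    have hmem := mem_shapeCells.1 c.2
    have h1 : c.1.1 = i := Fin.ext hc.1
    rw [← h1]
    exact ⟨rfl, hmem.1, hmem.2⟩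
  have := Finset.card_le_card hsub
  rw [card_row_cols le_rfl le_rfl] at this
  have hi : (i:ℕ) < d := i.isLt
  simp only [pos, dif_pos hi, Fin.eta]
  omega

lemma pos_out (T : shapeCells d lam mu → Fin d) (v : ℕ) {i : ℕ} (hi : ¬ i < d) :
    pos T v i = 0 := by
  have : (Finset.univ.filter fun c : shapeCells d lam mu =>
      ((c : Fin d × ℕ).1 : ℕ) = i ∧ ((T c : ℕ) < v)) = ∅ := by
    apply Finset.eq_empty_of_forall_notMem
    intro c hc
    simp only [mem_filter] at hc
    exact hi (hc.2.1 ▸ (c : Fin d × ℕ).1.isLt)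
  unfold pos
  rw [dif_neg hi, Finset.card_eq_zero.2 this]

lemma lt_pos_iff (hT : IsSSYT d lam mu T) (c : shapeCells d lam mu) (v : ℕ) :
    ((T c : ℕ) < v) ↔ (c : Fin d × ℕ).2 < pos T v ((c : Fin d × ℕ).1 : ℕ) := by
  obtain ⟨⟨i, j⟩, hc⟩ := c
  have hmem := mem_shapeCells.1 hc
  simp only at hmem ⊢
  have hi : (i : ℕ) < d := i.isLt
  constructor
  · intro hv
    have hsub : (Finset.univ.filter fun c : shapeCells d lam mu =>
        ((c : Fin d × ℕ).1 : ℕ) = (i : ℕ) ∧ mu i ≤ (c : Fin d × ℕ).2 ∧ (c : Fin d × ℕ).2 < j + 1) ⊆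
        (Finset.univ.filter fun c : shapeCells d lam mu =>
        ((c : Fin d × ℕ).1 : ℕ) = (i : ℕ) ∧ ((T c : ℕ) < v)) := by
      intro c' hc'
      simp only [mem_filter, mem_univ, true_and] at hc' ⊢
      refine ⟨hc'.1, lt_of_le_of_lt ?_ hv⟩
      have hrow : (c' : Fin d × ℕ).1 = (⟨(i,j), hc⟩ : shapeCells d lam mu).1.1 := Fin.ext hc'.1
      have := hT.1 c' ⟨(i,j), hc⟩ hrow (by simpa using Nat.lt_succ_iff.1 hc'.2.2)
      exact this
    have hcard := Finset.card_le_card hsub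
    rw [card_row_cols le_rfl (by omega : j + 1 ≤ lam i)] at hcard
    simp only [pos, dif_pos hi, Fin.eta]
    omega
  · intro hpos
    by_contra hv
    push_neg at hv
    have hsub : (Finset.univ.filter fun c : shapeCells d lam mu =>
        ((c : Fin d × ℕ).1 : ℕ) = (i : ℕ) ∧ ((T c : ℕ) < v)) ⊆
        (Finset.univ.filter fun c : shapeCells d lam mu =>
        ((c : Fin d × ℕ).1 : ℕ) = (i : ℕ) ∧ mu i ≤ (c : Fin d × ℕ).2 ∧ (c : Fin d × ℕ).2 < j) := by
      intro c' hc'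
      simp only [mem_filter, mem_univ, true_and] at hc' ⊢
      have hmem' := mem_shapeCells.1 c'.2
      have h1 : c'.1.1 = i := Fin.ext hc'.1
      refine ⟨hc'.1, h1 ▸ hmem'.1, ?_⟩
      by_contra hcol
      push_neg at hcol
      have hrow : (⟨(i,j), hc⟩ : shapeCells d lam mu).1.1 = (c' : Fin d × ℕ).1 := Fin.ext hc'.1.symm
      have := hT.1 ⟨(i,j), hc⟩ c' hrow (by simpa using hcol)
      have : (T ⟨(i,j), hc⟩ : ℕ) ≤ (T c' : ℕ) := this
      omega
    have hcard := Finset.card_le_card hsub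
    rw [card_row_cols le_rfl (le_of_lt hmem.2)] at hcard
    simp only [pos, dif_pos hi, Fin.eta] at hpos
    omega

/-- GT interlacing: entries `< v+1` in row `i+1` end before entries `< v` in row `i` do. -/
lemma pos_succ_le (hT : IsSSYT d lam mu T) (hlam : Antitone lam) (hmu : Antitone mu)
    (hml : ∀ r, mu r ≤ lam r) (v : ℕ) {i : ℕ} (hi : i + 1 < d) :
    pos T (v + 1) (i + 1) ≤ pos T v i := by
  by_contra hcon
  push_neg at hcon
  set j := pos T v i with hj
  have hid : i < d := by omega
  have hmuj : mu ⟨i, hid⟩ ≤ j := by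
    have := muN_le_pos T v ⟨i, hid⟩
    simpa using this
  have hjlt : j < lam ⟨i+1, hi⟩ := lt_of_lt_of_le hcon (pos_le_lam T (v+1) ⟨i+1, hi⟩ (hml _))
  have hcell : ((⟨i, hid⟩, j) : Fin d × ℕ) ∈ shapeCells d lam mu := by
    refine mem_shapeCells.2 ⟨hmuj, lt_of_lt_of_le hjlt (hlam ?_)⟩
    exact Fin.mk_le_mk.2 (by omega)
  have hcell' : ((⟨i+1, hi⟩, j) : Fin d × ℕ) ∈ shapeCells d lam mu := by
    refine mem_shapeCells.2 ⟨le_trans (hmu (Fin.mk_le_mk.2 (by omega))) hmuj, hjlt⟩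
  have h1 : ¬ ((T ⟨_, hcell⟩ : ℕ) < v) := by
    rw [lt_pos_iff hT]
    simp [hj]
  have h2 : (T ⟨_, hcell'⟩ : ℕ) < v + 1 := by
    rw [lt_pos_iff hT]
    simpa using hcon
  have := hT.2 ⟨_, hcell⟩ ⟨_, hcell'⟩ rfl rfl
  have : (T ⟨_, hcell⟩ : ℕ) < (T ⟨_, hcell'⟩ : ℕ) := this
  omega

end Prefix

section BK

variable {d : ℕ} {lam mu : Fin d → ℕ}

noncomputable def BKLo (T : shapeCells d lam mu → Fin d) (k i : ℕ) : ℕ :=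
  max (pos T k i) (pos T (k+2) (i+1))

noncomputable def BKHi (T : shapeCells d lam mu → Fin d) (k i : ℕ) : ℕ :=
  if i = 0 then pos T (k+2) 0 else min (pos T (k+2) i) (pos T k (i-1))

noncomputable def BKq' (T : shapeCells d lam mu → Fin d) (k i : ℕ) : ℕ :=
  BKLo T k i + BKHi T k i - pos T (k+1) i

noncomputable def BK {k : ℕ} (hk : k + 1 < d) (T : shapeCells d lam mu → Fin d) :
    shapeCells d lam mu → Fin d := fun c =>
  if (T c : ℕ) = k ∨ (T c : ℕ) = k + 1 then
    (if (c : Fin d × ℕ).2 < BKq' T k ((c : Fin d × ℕ).1 : ℕ) then ⟨k, by omega⟩ else ⟨k+1, hk⟩)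
  else T c

variable {T : shapeCells d lam mu → Fin d} {k : ℕ}

lemma BKHi_le (T : shapeCells d lam mu → Fin d) (k i : ℕ) : BKHi T k i ≤ pos T (k+2) i := by
  unfold BKHi
  split
  · subst ‹i = 0›; exact le_rfl
  · exact min_le_left _ _


lemma row_cnt {U : shapeCells d lam mu → Fin d} (hU : IsSSYT d lam mu U)
    (hml : ∀ r, mu r ≤ lam r) (w : Fin d) (i : Fin d) :
    (Finset.univ.filter fun c : shapeCells d lam mu =>
        U c = w ∧ (c : Fin d × ℕ).1 = i).card
      = pos U ((w : ℕ) + 1) (i : ℕ) - pos U (w : ℕ) (i : ℕ) := by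
  have hfe : (Finset.univ.filter fun c : shapeCells d lam mu =>
      U c = w ∧ (c : Fin d × ℕ).1 = i) =
      (Finset.univ.filter fun c : shapeCells d lam mu =>
      ((c : Fin d × ℕ).1 : ℕ) = (i : ℕ) ∧ pos U (w : ℕ) (i : ℕ) ≤ (c : Fin d × ℕ).2 ∧
        (c : Fin d × ℕ).2 < pos U ((w : ℕ) + 1) (i : ℕ)) := by
    apply Finset.filter_congr
    intro c _
    have h1 := lt_pos_iff hU c ((w : ℕ) + 1)
    have h2 := lt_pos_iff hU c (w : ℕ)
    constructor
    · rintro ⟨hv, hr⟩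
      rw [hr] at h1 h2
      have hvv : (U c : ℕ) = (w : ℕ) := by rw [hv]
      refine ⟨by rw [hr], ?_, ?_⟩
      · by_contra hcon
        push_neg at hcon
        rw [← h2] at hcon
        omega
      · rw [← h1]; omega
    · rintro ⟨hr, hge, hlt⟩
      have hrf : (c : Fin d × ℕ).1 = i := Fin.ext hr
      rw [hrf] at h1 h2
      rw [← h1] at hlt
      have hge' : ¬ ((U c : ℕ) < (w : ℕ)) := by
        rw [h2]; omega
      exact ⟨Fin.ext (by omega), hrf⟩
  rw [hfe, card_row_cols (muN_le_pos U _ i) (pos_le_lam U _ i (hml i))]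

lemma prod_X_fiber {f : shapeCells d lam mu → Fin d} :
    ∏ c : shapeCells d lam mu, (X (f c) : MvPolynomial (Fin d) ℤ)
      = ∏ v : Fin d, (X v : MvPolynomial (Fin d) ℤ) ^
          (Finset.univ.filter fun c => f c = v).card := by
  rw [← Finset.prod_fiberwise Finset.univ f (fun c => (X (f c) : MvPolynomial (Fin d) ℤ))]
  refine Finset.prod_congr rfl fun v _ => ?_
  rw [Finset.prod_congr rfl (fun c hc => by rw [(Finset.mem_filter.1 hc).2]),
    Finset.prod_const]

lemma BK_val_block {hk : k + 1 < d} {c : shapeCells d lam mu}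
    (hb : (T c : ℕ) = k ∨ (T c : ℕ) = k + 1) :
    (BK hk T c : ℕ) =
      if (c : Fin d × ℕ).2 < BKq' T k ((c : Fin d × ℕ).1 : ℕ) then k else k + 1 := by
  simp only [BK, if_pos hb]
  split <;> rfl

lemma BK_val_nonblock {hk : k + 1 < d} {c : shapeCells d lam mu}
    (hb : ¬ ((T c : ℕ) = k ∨ (T c : ℕ) = k + 1)) :
    BK hk T c = T c := by
  simp only [BK, if_neg hb]

lemma BK_block_iff {hk : k + 1 < d} {c : shapeCells d lam mu} :
    ((BK hk T c : ℕ) = k ∨ (BK hk T c : ℕ) = k + 1) ↔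
      ((T c : ℕ) = k ∨ (T c : ℕ) = k + 1) := by
  by_cases hb : (T c : ℕ) = k ∨ (T c : ℕ) = k + 1
  · rw [BK_val_block hb]
    split <;> simp [hb]
  · rw [BK_val_nonblock hb]

section withSSYT

variable (hT : IsSSYT d lam mu T) (hlam : Antitone lam) (hmu : Antitone mu)
  (hml : ∀ r, mu r ≤ lam r)

include hT hlam hmu hml

lemma BKLo_le_q (i : ℕ) : BKLo T k i ≤ pos T (k+1) i := by
  unfold BKLo
  apply max_le
  · exact pos_mono T (by omega) i
  · by_cases hi : i + 1 < d
    · exact pos_succ_le hT hlam hmu hml (k+1) hi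
    · rw [pos_out T _ hi]
      exact Nat.zero_le _

lemma q_le_BKHi (i : ℕ) : pos T (k+1) i ≤ BKHi T k i := by
  unfold BKHi
  split
  · subst ‹i = 0›; exact pos_mono T (by omega) 0
  · apply le_min
    · exact pos_mono T (by omega) i
    · by_cases hi : i < d
      · have hne : ¬ i = 0 := by assumption
        have h := pos_succ_le hT hlam hmu hml (v := k) (i := i - 1) (by omega)
        have heq : i - 1 + 1 = i := by omega
        rwa [heq] at h
      · rw [pos_out T _ hi]
        exact Nat.zero_le _

lemma BKLo_le_BKq' (i : ℕ) : BKLo T k i ≤ BKq' T k i := by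
  have h1 := BKLo_le_q hT hlam hmu hml (k := k) i
  have h2 := q_le_BKHi hT hlam hmu hml (k := k) i
  unfold BKq'; omega

lemma BKq'_le_BKHi (i : ℕ) : BKq' T k i ≤ BKHi T k i := by
  have h1 := BKLo_le_q hT hlam hmu hml (k := k) i
  have h2 := q_le_BKHi hT hlam hmu hml (k := k) i
  unfold BKq'; omega

/-- Master characterization of values of `BK T`. -/
lemma BK_lt_iff (hk : k + 1 < d) (v : ℕ) (c : shapeCells d lam mu) :
    ((BK hk T c : ℕ) < v) ↔
      (c : Fin d × ℕ).2 <
        (if v = k + 1 then BKq' T k ((c : Fin d × ℕ).1 : ℕ)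
          else pos T v ((c : Fin d × ℕ).1 : ℕ)) := by
  set i : ℕ := ((c : Fin d × ℕ).1 : ℕ) with hidef
  set j : ℕ := (c : Fin d × ℕ).2 with hjdef
  have hposk : ((T c : ℕ) < k) ↔ j < pos T k i := lt_pos_iff hT c k
  have hposk1 : ((T c : ℕ) < k+1) ↔ j < pos T (k+1) i := lt_pos_iff hT c (k+1)
  have hposk2 : ((T c : ℕ) < k+2) ↔ j < pos T (k+2) i := lt_pos_iff hT c (k+2)
  have hLoq' := BKLo_le_BKq' hT hlam hmu hml (k := k) i
  have hq'Hi := BKq'_le_BKHi hT hlam hmu hml (k := k) i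
  have hkLo : pos T k i ≤ BKLo T k i := le_max_left _ _
  have hHik2 : BKHi T k i ≤ pos T (k+2) i := BKHi_le T k i
  by_cases hblock : (T c : ℕ) = k ∨ (T c : ℕ) = k + 1
  · have hjk : pos T k i ≤ j := by
      by_contra h
      push_neg at h
      rw [← hposk] at h
      omega
    have hjk2 : j < pos T (k+2) i := by rw [← hposk2]; omega
    have hval : (BK hk T c : ℕ) = if j < BKq' T k i then k else k + 1 := by
      simp only [BK, if_pos hblock, ← hidef, ← hjdef]
      split <;> rfl
    rw [hval]
    by_cases hv : v = k + 1
    · subst hv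
      rw [if_pos rfl]
      by_cases hq : j < BKq' T k i
      · rw [if_pos hq]; omega
      · rw [if_neg hq]; omega
    · rw [if_neg hv]
      rcases Nat.lt_or_ge v (k+1) with hvk | hvk
      · have hpos := pos_mono T (show v ≤ k by omega) i
        by_cases hq : j < BKq' T k i
        · rw [if_pos hq]; omega
        · rw [if_neg hq]; omega
      · have hpos := pos_mono T (show k+2 ≤ v by omega) i
        by_cases hq : j < BKq' T k i
        · rw [if_pos hq]; omega
        · rw [if_neg hq]; omega
  · have hval : BK hk T c = T c := by
      simp only [BK, if_neg hblock]
    rw [hval]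
    push_neg at hblock
    by_cases hv : v = k + 1
    · subst hv
      rw [if_pos rfl]
      constructor
      · intro h
        have h2 : (T c : ℕ) < k := by omega
        rw [hposk] at h2
        omega
      · intro h
        by_contra hge
        push_neg at hge
        have h2 : ¬ ((T c : ℕ) < k + 2) := by omega
        rw [hposk2] at h2
        omega
    · rw [if_neg hv]
      exact lt_pos_iff hT c v

lemma BK_isSSYT (hk : k + 1 < d) : IsSSYT d lam mu (BK hk T) := by
  constructor
  · intro c c' hrow hcol
    by_contra hcon
    push_neg at hcon
    have hlt : (BK hk T c' : ℕ) < (BK hk T c : ℕ) := hcon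
    have h1 := (BK_lt_iff hT hlam hmu hml hk (BK hk T c : ℕ) c').1 hlt
    have h2 : ¬ ((BK hk T c : ℕ) < (BK hk T c : ℕ)) := lt_irrefl _
    rw [BK_lt_iff hT hlam hmu hml hk _ c] at h2
    rw [← hrow] at h1
    push_neg at h2
    omega
  · intro c c' hrow hcol
    by_contra hcon
    push_neg at hcon
    obtain ⟨v, hv⟩ : ∃ v, (BK hk T c' : ℕ) = v := ⟨_, rfl⟩
    obtain ⟨i, hi⟩ : ∃ i, ((c : Fin d × ℕ).1 : ℕ) = i := ⟨_, rfl⟩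
    have hle : v ≤ (BK hk T c : ℕ) := by
      rw [← hv]; exact hcon
    have hid : i + 1 < d := by
      have h := (c' : Fin d × ℕ).1.isLt
      omega
    have h1 : (BK hk T c' : ℕ) < v + 1 := by omega
    rw [BK_lt_iff hT hlam hmu hml hk (v+1) c', hrow, hi, ← hcol] at h1
    have h2 : ¬ ((BK hk T c : ℕ) < v) := by omega
    rw [BK_lt_iff hT hlam hmu hml hk v c, hi] at h2
    push_neg at h2
    have key : (if v + 1 = k + 1 then BKq' T k (i+1) else pos T (v+1) (i+1))
        ≤ (if v = k + 1 then BKq' T k i else pos T v i) := by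
      by_cases hv1 : v + 1 = k + 1
      · have hvk : v = k := by omega
        rw [if_pos hv1, if_neg (by omega)]
        have ha := BKq'_le_BKHi hT hlam hmu hml (k := k) (i+1)
        have hHi : BKHi T k (i+1) ≤ pos T k i := by
          unfold BKHi
          rw [if_neg (by omega)]
          simpa using min_le_right _ _
        rw [hvk]
        omega
      · by_cases hv2 : v = k + 1
        · rw [if_neg hv1, if_pos hv2]
          have ha : pos T (k+2) (i+1) ≤ BKLo T k i := le_max_right _ _
          have hb := BKLo_le_BKq' hT hlam hmu hml (k := k) i
          have hc2 : v + 1 = k + 2 := by omega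
          rw [hc2]
          omega
        · rw [if_neg hv1, if_neg hv2]
          exact pos_succ_le hT hlam hmu hml v hid
    omega

lemma pos_BK_of_ne (hk : k + 1 < d) {v : ℕ} (hv : v ≠ k + 1) (i : ℕ) :
    pos (BK hk T) v i = pos T v i := by
  have key : ∀ c : shapeCells d lam mu, ((BK hk T c : ℕ) < v) ↔ ((T c : ℕ) < v) := by
    intro c
    rw [BK_lt_iff hT hlam hmu hml hk v c, if_neg hv, lt_pos_iff hT c v]
  unfold pos
  congr 1
  apply congrArg
  apply Finset.filter_congr
  intro c _
  exact and_congr_right fun _ => key c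


lemma mu_le_BKq' (hk : k + 1 < d) (i : Fin d) : mu i ≤ BKq' T k (i : ℕ) := by
  have h1 := BKLo_le_BKq' hT hlam hmu hml (k := k) (i : ℕ)
  have h2 : pos T k (i:ℕ) ≤ BKLo T k (i:ℕ) := le_max_left _ _
  have h3 := muN_le_pos T k i
  omega

lemma BKq'_le_lam (hk : k + 1 < d) (i : Fin d) : BKq' T k (i : ℕ) ≤ lam i := by
  have h1 := BKq'_le_BKHi hT hlam hmu hml (k := k) (i : ℕ)
  have h2 : BKHi T k (i:ℕ) ≤ pos T (k+2) (i:ℕ) := BKHi_le T k (i:ℕ)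
  have h3 := pos_le_lam T (k+2) i (hml i)
  omega

lemma pos_BK_k1 (hk : k + 1 < d) (i : Fin d) :
    pos (BK hk T) (k+1) (i : ℕ) = BKq' T k (i : ℕ) := by
  have key : ∀ c : shapeCells d lam mu, ((c : Fin d × ℕ).1 : ℕ) = (i : ℕ) →
      (((BK hk T c : ℕ) < k + 1) ↔ (c : Fin d × ℕ).2 < BKq' T k (i : ℕ)) := by
    intro c hc
    rw [BK_lt_iff hT hlam hmu hml hk (k+1) c, if_pos rfl, hc]
  have hfe : (Finset.univ.filter fun c : shapeCells d lam mu =>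
      ((c : Fin d × ℕ).1 : ℕ) = (i : ℕ) ∧ ((BK hk T c : ℕ) < k + 1)) =
      (Finset.univ.filter fun c : shapeCells d lam mu =>
      ((c : Fin d × ℕ).1 : ℕ) = (i : ℕ) ∧ mu i ≤ (c : Fin d × ℕ).2 ∧
        (c : Fin d × ℕ).2 < BKq' T k (i : ℕ)) := by
    apply Finset.filter_congr
    intro c _
    constructor
    · rintro ⟨h1, h2⟩
      have hmem := mem_shapeCells.1 c.2
      refine ⟨h1, ?_, (key c h1).1 h2⟩
      have := hmem.1
      rw [show c.1.1 = i from Fin.ext h1] at this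
      exact this
    · rintro ⟨h1, _, h3⟩
      exact ⟨h1, (key c h1).2 h3⟩
  have hi : (i : ℕ) < d := i.isLt
  unfold pos
  rw [dif_pos hi, hfe, card_row_cols le_rfl (BKq'_le_lam hT hlam hmu hml hk i)]
  have h1 := mu_le_BKq' hT hlam hmu hml (k := k) hk i
  simp only [Fin.eta]
  omega

lemma BK_BK (hk : k + 1 < d) : BK hk (BK hk T) = T := by
  funext c
  have hq'' : BKq' (BK hk T) k ((c : Fin d × ℕ).1 : ℕ) = pos T (k+1) ((c : Fin d × ℕ).1 : ℕ) := by
    unfold BKq' BKLo BKHi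
    simp only [pos_BK_of_ne hT hlam hmu hml hk (show k ≠ k + 1 by omega),
               pos_BK_of_ne hT hlam hmu hml hk (show k + 2 ≠ k + 1 by omega),
               pos_BK_k1 hT hlam hmu hml hk ((c : Fin d × ℕ).1)]
    have h1 := BKLo_le_q hT hlam hmu hml (k := k) ((c : Fin d × ℕ).1 : ℕ)
    have h2 := q_le_BKHi hT hlam hmu hml (k := k) ((c : Fin d × ℕ).1 : ℕ)
    unfold BKq' BKLo BKHi at *
    omega
  by_cases hblock : (T c : ℕ) = k ∨ (T c : ℕ) = k + 1
  · have hblock' : (BK hk T c : ℕ) = k ∨ (BK hk T c : ℕ) = k + 1 :=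
      (BK_block_iff (hk := hk)).2 hblock
    apply Fin.ext
    rw [BK_val_block hblock', hq'']
    have hq : ((T c : ℕ) < k + 1) ↔ (c : Fin d × ℕ).2 < pos T (k+1) ((c : Fin d × ℕ).1 : ℕ) :=
      lt_pos_iff hT c (k+1)
    by_cases hj : (c : Fin d × ℕ).2 < pos T (k+1) ((c : Fin d × ℕ).1 : ℕ)
    · rw [if_pos hj]; omega
    · rw [if_neg hj]; omega
  · have hblock' : ¬ ((BK hk T c : ℕ) = k ∨ (BK hk T c : ℕ) = k + 1) := by
      rw [not_iff_not.2 (BK_block_iff (hk := hk))]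
      exact hblock
    rw [BK_val_nonblock hblock', BK_val_nonblock hblock]


lemma tele (hk : k + 1 < d) :
    ∑ i ∈ Finset.range d, (BKq' T k i - pos T k i)
      = ∑ i ∈ Finset.range d, (pos T (k+2) i - pos T (k+1) i) := by
  have hLoq := fun i => BKLo_le_q hT hlam hmu hml (k := k) i
  have hqHi := fun i => q_le_BKHi hT hlam hmu hml (k := k) i
  have step1 : ∀ i, BKq' T k i - pos T k i
      = (BKLo T k i - pos T k i) + (BKHi T k i - pos T (k+1) i) := by
    intro i
    have h1 := hLoq i
    have h2 := hqHi i
    have h3 : pos T k i ≤ BKLo T k i := le_max_left _ _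
    unfold BKq'
    omega
  have step2 : ∀ i, pos T (k+2) i - pos T (k+1) i
      = (pos T (k+2) i - BKHi T k i) + (BKHi T k i - pos T (k+1) i) := by
    intro i
    have h1 := BKHi_le T k i
    have h2 := hqHi i
    omega
  rw [Finset.sum_congr rfl (fun i _ => step1 i), Finset.sum_congr rfl (fun i _ => step2 i),
    Finset.sum_add_distrib, Finset.sum_add_distrib]
  congr 1
  have hstep : ∀ i : ℕ, BKLo T k i - pos T k i
      = pos T (k+2) (i+1) - BKHi T k (i+1) := by
    intro i
    unfold BKLo BKHi
    rw [if_neg (Nat.succ_ne_zero i)]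
    simp only [Nat.add_sub_cancel]
    rcases le_total (pos T k i) (pos T (k+2) (i+1)) with h | h
    · rw [max_eq_right h, min_eq_right h]
    · rw [max_eq_left h, min_eq_left h]
      omega
  rw [Finset.sum_congr rfl (fun i _ => hstep i)]
  have h0 : pos T (k+2) 0 - BKHi T k 0 = 0 := by
    unfold BKHi
    rw [if_pos rfl]
    omega
  have hd : pos T (k+2) d - BKHi T k d = 0 := by
    rw [pos_out T _ (lt_irrefl d)]
    omega
  have h1 := Finset.sum_range_succ' (fun j => pos T (k+2) j - BKHi T k j) d
  have h2 := Finset.sum_range_succ (fun j => pos T (k+2) j - BKHi T k j) d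
  omega

lemma cnt_BK_a (hk : k + 1 < d) :
    (Finset.univ.filter fun c : shapeCells d lam mu => BK hk T c = ⟨k, by omega⟩).card
      = (Finset.univ.filter fun c : shapeCells d lam mu => T c = ⟨k+1, hk⟩).card := by
  have hT' := BK_isSSYT hT hlam hmu hml hk
  have hfib : ∀ (f : shapeCells d lam mu → Fin d) (w : Fin d),
      (Finset.univ.filter fun c => f c = w).card
        = ∑ i : Fin d, (Finset.univ.filter fun c : shapeCells d lam mu =>
            f c = w ∧ (c : Fin d × ℕ).1 = i).card := by
    intro f w
    rw [Finset.card_eq_sum_card_fiberwise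
      (f := fun c : shapeCells d lam mu => (c : Fin d × ℕ).1) (t := Finset.univ)
      (fun _ _ => Finset.mem_univ _)]
    refine Finset.sum_congr rfl fun i _ => ?_
    rw [Finset.filter_filter]
  rw [hfib, hfib]
  have lhs : ∀ i : Fin d, (Finset.univ.filter fun c : shapeCells d lam mu =>
      BK hk T c = ⟨k, by omega⟩ ∧ (c : Fin d × ℕ).1 = i).card
        = BKq' T k (i : ℕ) - pos T k (i : ℕ) := by
    intro i
    rw [row_cnt hT' hml ⟨k, by omega⟩ i]
    simp only
    rw [pos_BK_k1 hT hlam hmu hml hk i, pos_BK_of_ne hT hlam hmu hml hk (by omega) (i : ℕ)]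
  have rhs : ∀ i : Fin d, (Finset.univ.filter fun c : shapeCells d lam mu =>
      T c = ⟨k+1, hk⟩ ∧ (c : Fin d × ℕ).1 = i).card
        = pos T (k+2) (i : ℕ) - pos T (k+1) (i : ℕ) := by
    intro i
    rw [row_cnt hT hml ⟨k+1, hk⟩ i]
  rw [Finset.sum_congr rfl (fun i _ => lhs i), Finset.sum_congr rfl (fun i _ => rhs i),
    Fin.sum_univ_eq_sum_range (fun j => BKq' T k j - pos T k j) d,
    Fin.sum_univ_eq_sum_range (fun j => pos T (k+2) j - pos T (k+1) j) d]
  exact tele hT hlam hmu hml hk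

lemma cnt_BK_of_ne (hk : k + 1 < d) {v : Fin d} (hva : (v : ℕ) ≠ k) (hvb : (v : ℕ) ≠ k + 1) :
    (Finset.univ.filter fun c : shapeCells d lam mu => BK hk T c = v).card
      = (Finset.univ.filter fun c : shapeCells d lam mu => T c = v).card := by
  congr 1
  apply Finset.filter_congr
  intro c _
  by_cases hb : (T c : ℕ) = k ∨ (T c : ℕ) = k + 1
  · have hb' := (BK_block_iff (hk := hk) (c := c)).2 hb
    constructor
    · intro h
      rw [h] at hb'
      omega
    · intro h
      rw [h] at hb
      omega
  · rw [BK_val_nonblock hb]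

lemma cnt_BK_b (hk : k + 1 < d) :
    (Finset.univ.filter fun c : shapeCells d lam mu => BK hk T c = ⟨k+1, hk⟩).card
      = (Finset.univ.filter fun c : shapeCells d lam mu => T c = ⟨k, by omega⟩).card := by
  have hblk : ∀ (f : shapeCells d lam mu → Fin d),
      (Finset.univ.filter fun c => f c = ⟨k, by omega⟩).card
        + (Finset.univ.filter fun c => f c = ⟨k+1, hk⟩).card
        = (Finset.univ.filter fun c => (f c : ℕ) = k ∨ (f c : ℕ) = k + 1).card := by
    intro f
    rw [← Finset.card_union_of_disjoint]
    · congr 1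
      rw [← Finset.filter_or]
      apply Finset.filter_congr
      intro c _
      constructor
      · rintro (h | h) <;> rw [h]
        · left; rfl
        · right; rfl
      · rintro (h | h)
        · left; exact Fin.ext h
        · right; exact Fin.ext h
    · rw [Finset.disjoint_filter]
      intro c _ h1 h2
      rw [h1] at h2
      have : (k : ℕ) = k + 1 := by
        have := Fin.mk.injEq (n := d) k (by omega : k < d) (k+1) hk ▸ h2
        exact Fin.mk_eq_mk.1 h2
      omega
  have h1 := hblk T
  have h2 := hblk (BK hk T)
  have h3 : (Finset.univ.filter fun c : shapeCells d lam mu =>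
      (BK hk T c : ℕ) = k ∨ (BK hk T c : ℕ) = k + 1).card
      = (Finset.univ.filter fun c : shapeCells d lam mu =>
      (T c : ℕ) = k ∨ (T c : ℕ) = k + 1).card := by
    congr 1
    apply Finset.filter_congr
    intro c _
    exact BK_block_iff (hk := hk)
  have h4 := cnt_BK_a hT hlam hmu hml hk
  omega

end withSSYT
end BK

section Symmetry

variable {d : ℕ} {lam mu : Fin d → ℕ}

lemma rename_adj_swap (hlam : Antitone lam) (hmu : Antitone mu) (hml : ∀ r, mu r ≤ lam r)
    {k : ℕ} (hk : k + 1 < d) :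
    rename (Equiv.swap (⟨k, by omega⟩ : Fin d) ⟨k+1, hk⟩) (skewSchur d lam mu)
      = skewSchur d lam mu := by
  unfold skewSchur
  rw [map_sum]
  refine Finset.sum_nbij' (i := fun T => BK hk T) (j := fun T => BK hk T) ?_ ?_ ?_ ?_ ?_
  · intro T hT
    simp only [Finset.mem_filter, Finset.mem_univ, true_and] at hT ⊢
    exact BK_isSSYT hT hlam hmu hml hk
  · intro T hT
    simp only [Finset.mem_filter, Finset.mem_univ, true_and] at hT ⊢
    exact BK_isSSYT hT hlam hmu hml hk
  · intro T hT
    simp only [Finset.mem_filter, Finset.mem_univ, true_and] at hT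
    exact BK_BK hT hlam hmu hml hk
  · intro T hT
    simp only [Finset.mem_filter, Finset.mem_univ, true_and] at hT
    exact BK_BK hT hlam hmu hml hk
  · intro T hT
    simp only [Finset.mem_filter, Finset.mem_univ, true_and] at hT
    rw [map_prod]
    simp only [rename_X]
    rw [prod_X_fiber, prod_X_fiber]
    refine Finset.prod_congr rfl fun v _ => ?_
    congr 1
    have hswap : ∀ c : shapeCells d lam mu,
        Equiv.swap (⟨k, by omega⟩ : Fin d) ⟨k+1, hk⟩ (T c) = v ↔
          T c = Equiv.swap (⟨k, by omega⟩ : Fin d) ⟨k+1, hk⟩ v := by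
      intro c
      constructor
      · intro h; rw [← h, Equiv.swap_apply_self]
      · intro h; rw [h, Equiv.swap_apply_self]
    rw [Finset.filter_congr fun c _ => hswap c]
    by_cases hva : v = (⟨k, by omega⟩ : Fin d)
    · subst hva
      rw [Equiv.swap_apply_left]
      exact ((cnt_BK_a hT hlam hmu hml hk)).symm
    · by_cases hvb : v = (⟨k+1, hk⟩ : Fin d)
      · subst hvb
        rw [Equiv.swap_apply_right]
        exact ((cnt_BK_b hT hlam hmu hml hk)).symm
      · rw [Equiv.swap_apply_of_ne_of_ne hva hvb]
        refine ((cnt_BK_of_ne hT hlam hmu hml hk ?_ ?_)).symm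
        · intro h; exact hva (Fin.ext h)
        · intro h; exact hvb (Fin.ext h)

lemma rename_perm_skewSchur (hlam : Antitone lam) (hmu : Antitone mu) (hml : ∀ r, mu r ≤ lam r)
    (σ : Equiv.Perm (Fin d)) :
    rename (⇑σ) (skewSchur d lam mu) = skewSchur d lam mu := by
  cases d with
  | zero =>
    have : σ = Equiv.refl (Fin 0) := Subsingleton.elim _ _
    subst this
    simp [rename_id]
  | succ n =>
    have hσ : σ ∈ Submonoid.closure
        (Set.range fun i : Fin n => Equiv.swap i.castSucc i.succ) := by
      rw [Equiv.Perm.mclosure_swap_castSucc_succ]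
      trivial
    induction hσ using Submonoid.closure_induction with
    | one =>
      have : ⇑(1 : Equiv.Perm (Fin (n+1))) = id := rfl
      rw [this, rename_id, AlgHom.id_apply]
    | mul σ₁ σ₂ hσ₁ hσ₂ ih₁ ih₂ =>
      have : ⇑(σ₁ * σ₂) = ⇑σ₁ ∘ ⇑σ₂ := rfl
      rw [this, ← rename_rename, ih₂, ih₁]
    | mem τ hτ =>
      obtain ⟨i, rfl⟩ := hτ
      show rename ⇑(Equiv.swap i.castSucc i.succ) (skewSchur (n+1) lam mu)
        = skewSchur (n+1) lam mu
      have hik : ((i : ℕ) : ℕ) + 1 < n + 1 := by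
        have := i.isLt
        omega
      have h1 : i.castSucc = (⟨(i : ℕ), by omega⟩ : Fin (n+1)) := by
        apply Fin.ext
        simp
      have h2 : i.succ = (⟨(i : ℕ) + 1, hik⟩ : Fin (n+1)) := by
        apply Fin.ext
        simp
      rw [h1, h2]
      exact rename_adj_swap hlam hmu hml hik

end Symmetry

section Rotate

def revP (d : ℕ) : Equiv.Perm (Fin d) :=
  Function.Involutive.toPerm (fun i => ⟨d - 1 - (i : ℕ), Nat.lt_of_le_of_lt (Nat.sub_le _ _) (Nat.sub_lt (Nat.zero_lt_of_lt i.2) Nat.one_pos)⟩)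
    (fun i => by
      apply Fin.ext
      have := i.isLt
      simp only
      omega)

lemma revP_apply {d : ℕ} (i : Fin d) :
    (revP d i : ℕ) = d - 1 - (i : ℕ) := rfl

lemma revP_revP {d : ℕ} (i : Fin d) : revP d (revP d i) = i := by
  apply Fin.ext
  rw [revP_apply, revP_apply]
  have := i.isLt
  omega

lemma revP_le_iff {d : ℕ} {u v : Fin d} : revP d u ≤ revP d v ↔ v ≤ u := by
  have hu := u.isLt
  have hv := v.isLt
  rw [Fin.le_def, Fin.le_def, revP_apply, revP_apply]
  omega

lemma revP_lt_iff {d : ℕ} {u v : Fin d} : revP d u < revP d v ↔ v < u := by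
  have hu := u.isLt
  have hv := v.isLt
  rw [Fin.lt_def, Fin.lt_def, revP_apply, revP_apply]
  omega

variable {d ℓ : ℕ} {β : Fin d → ℕ}

lemma mem_rot (hβℓ : ∀ i, β i ≤ ℓ) {p : Fin d × ℕ}
    (hp : p ∈ shapeCells d (fun _ => ℓ) (fun i => ℓ - β (revP d i))) :
    (revP d p.1, ℓ - 1 - p.2) ∈ shapeCells d β 0 := by
  have hm := mem_shapeCells.1 hp
  apply mem_shapeCells.2
  have h1 := hβℓ (revP d p.1)
  simp only [Pi.zero_apply] at hm ⊢
  omega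

lemma mem_rot' (hβℓ : ∀ i, β i ≤ ℓ) {p : Fin d × ℕ} (hp : p ∈ shapeCells d β 0) :
    (revP d p.1, ℓ - 1 - p.2) ∈ shapeCells d (fun _ => ℓ) (fun i => ℓ - β (revP d i)) := by
  have hm := mem_shapeCells.1 hp
  apply mem_shapeCells.2
  simp only [Pi.zero_apply] at hm
  have h1 := hβℓ p.1
  simp only [revP_revP]
  omega

noncomputable def rotT (hβℓ : ∀ i, β i ≤ ℓ) (S : shapeCells d β 0 → Fin d) :
    shapeCells d (fun _ => ℓ) (fun i => ℓ - β (revP d i)) → Fin d := fun c =>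
  revP d (S ⟨(revP d (c : Fin d × ℕ).1, ℓ - 1 - (c : Fin d × ℕ).2), mem_rot hβℓ c.2⟩)

noncomputable def rotT' (hβℓ : ∀ i, β i ≤ ℓ)
    (T : shapeCells d (fun _ => ℓ) (fun i => ℓ - β (revP d i)) → Fin d) :
    shapeCells d β 0 → Fin d := fun c =>
  revP d (T ⟨(revP d (c : Fin d × ℕ).1, ℓ - 1 - (c : Fin d × ℕ).2), mem_rot' hβℓ c.2⟩)

lemma rotT_isSSYT (hβℓ : ∀ i, β i ≤ ℓ) {S : shapeCells d β 0 → Fin d}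
    (hS : IsSSYT d β 0 S) :
    IsSSYT d (fun _ => ℓ) (fun i => ℓ - β (revP d i)) (rotT hβℓ S) := by
  constructor
  · intro c c' hrow hcol
    unfold rotT
    rw [revP_le_iff]
    apply hS.1
    · simp only [hrow]
    · simp only
      omega
  · intro c c' hrow hcol
    unfold rotT
    rw [revP_lt_iff]
    apply hS.2
    · simp only [revP_apply]
      have h1 := (c : Fin d × ℕ).1.isLt
      have h2 := (c' : Fin d × ℕ).1.isLt
      omega
    · simp only [hcol]
  
lemma rotT'_isSSYT (hβℓ : ∀ i, β i ≤ ℓ)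
    {T : shapeCells d (fun _ => ℓ) (fun i => ℓ - β (revP d i)) → Fin d}
    (hT : IsSSYT d (fun _ => ℓ) (fun i => ℓ - β (revP d i)) T) :
    IsSSYT d β 0 (rotT' hβℓ T) := by
  constructor
  · intro c c' hrow hcol
    unfold rotT'
    rw [revP_le_iff]
    apply hT.1
    · simp only [hrow]
    · simp only
      omega
  · intro c c' hrow hcol
    unfold rotT'
    rw [revP_lt_iff]
    apply hT.2
    · simp only [revP_apply]
      have h1 := (c : Fin d × ℕ).1.isLt
      have h2 := (c' : Fin d × ℕ).1.isLt
      omega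
    · simp only [hcol]

lemma rotCell_inv (hβℓ : ∀ i, β i ≤ ℓ) (c : shapeCells d β 0) :
    (⟨(revP d (revP d (c : Fin d × ℕ).1), ℓ - 1 - (ℓ - 1 - (c : Fin d × ℕ).2)),
        mem_rot hβℓ (mem_rot' hβℓ c.2)⟩ : shapeCells d β 0) = c := by
  apply Subtype.ext
  have hm := mem_shapeCells.1 c.2
  simp only [Pi.zero_apply] at hm
  have h1 := hβℓ (c : Fin d × ℕ).1
  apply Prod.ext
  · simp only [revP_revP]
  · simp only
    omega

lemma rotCell_inv' (hβℓ : ∀ i, β i ≤ ℓ)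
    (c : shapeCells d (fun _ => ℓ) (fun i => ℓ - β (revP d i))) :
    (⟨(revP d (revP d (c : Fin d × ℕ).1), ℓ - 1 - (ℓ - 1 - (c : Fin d × ℕ).2)),
        mem_rot' hβℓ (mem_rot hβℓ c.2)⟩ :
        shapeCells d (fun _ => ℓ) (fun i => ℓ - β (revP d i))) = c := by
  apply Subtype.ext
  have hm := mem_shapeCells.1 c.2
  apply Prod.ext
  · simp only [revP_revP]
  · simp only
    omega

lemma cell_congr {s : Finset (Fin d × ℕ)} (T : {x // x ∈ s} → Fin d) {p q : Fin d × ℕ}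
    (hp : p ∈ s) (hq : q ∈ s) (h : p = q) : T ⟨p, hp⟩ = T ⟨q, hq⟩ := by
  subst h
  rfl

lemma rotT_rotT' (hβℓ : ∀ i, β i ≤ ℓ)
    (T : shapeCells d (fun _ => ℓ) (fun i => ℓ - β (revP d i)) → Fin d) :
    rotT hβℓ (rotT' hβℓ T) = T := by
  funext c
  obtain ⟨⟨i, j⟩, hc⟩ := c
  have hm := mem_shapeCells.1 hc
  simp only at hm
  unfold rotT rotT'
  simp only
  rw [revP_revP]
  apply cell_congr
  apply Prod.ext
  · exact revP_revP i
  · simp only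
    omega

lemma rotT'_rotT (hβℓ : ∀ i, β i ≤ ℓ) (S : shapeCells d β 0 → Fin d) :
    rotT' hβℓ (rotT hβℓ S) = S := by
  funext c
  obtain ⟨⟨i, j⟩, hc⟩ := c
  have hm := mem_shapeCells.1 hc
  simp only [Pi.zero_apply] at hm
  have h1 := hβℓ i
  unfold rotT rotT'
  simp only
  rw [revP_revP]
  apply cell_congr
  apply Prod.ext
  · exact revP_revP i
  · simp only
    omega

lemma rotate_skewSchur (hβℓ : ∀ i, β i ≤ ℓ) :
    skewSchur d (fun _ => ℓ) (fun i => ℓ - β (revP d i))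
      = rename (⇑(revP d)) (skewSchur d β 0) := by
  unfold skewSchur
  rw [map_sum]
  refine Finset.sum_nbij' (i := fun T => rotT' hβℓ T) (j := fun S => rotT hβℓ S)
    ?_ ?_ ?_ ?_ ?_
  · intro T hT
    simp only [Finset.mem_filter, Finset.mem_univ, true_and] at hT ⊢
    exact rotT'_isSSYT hβℓ hT
  · intro S hS
    simp only [Finset.mem_filter, Finset.mem_univ, true_and] at hS ⊢
    exact rotT_isSSYT hβℓ hS
  · intro T hT
    exact rotT_rotT' hβℓ T
  · intro S hS
    exact rotT'_rotT hβℓ S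
  · intro T hT
    rw [map_prod]
    simp only [rename_X]
    refine Finset.prod_nbij' (i := fun c => ⟨(revP d (c : Fin d × ℕ).1, ℓ - 1 - (c : Fin d × ℕ).2), mem_rot hβℓ c.2⟩)
      (j := fun c => ⟨(revP d (c : Fin d × ℕ).1, ℓ - 1 - (c : Fin d × ℕ).2), mem_rot' hβℓ c.2⟩)
      (fun _ _ => Finset.mem_univ _) (fun _ _ => Finset.mem_univ _) ?_ ?_ ?_
    · intro c _
      obtain ⟨⟨i, j⟩, hc⟩ := c
      have hm := mem_shapeCells.1 hc
      simp only at hm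
      apply Subtype.ext
      apply Prod.ext
      · exact revP_revP i
      · simp only
        omega
    · intro c _
      obtain ⟨⟨i, j⟩, hc⟩ := c
      have hm := mem_shapeCells.1 hc
      simp only [Pi.zero_apply] at hm
      have h1 := hβℓ i
      apply Subtype.ext
      apply Prod.ext
      · exact revP_revP i
      · simp only
        omega
    · intro c _
      obtain ⟨⟨i, j⟩, hc⟩ := c
      have hm := mem_shapeCells.1 hc
      simp only at hm
      unfold rotT'
      simp only
      rw [revP_revP]
      apply congrArg
      apply cell_congr
      apply Prod.ext
      · exact (revP_revP i).symm
      · simp only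
        omega

end Rotate

section Split

variable {d ℓ : ℕ} {α β : Fin d → ℕ}

lemma colStep {lam mu : Fin d → ℕ} {T : shapeCells d lam mu → Fin d}
    (hcol : ∀ c c' : shapeCells d lam mu,
      ((c' : Fin d × ℕ).1 : ℕ) = ((c : Fin d × ℕ).1 : ℕ) + 1 →
      (c : Fin d × ℕ).2 = (c' : Fin d × ℕ).2 → T c < T c') :
    ∀ (n : ℕ) (c c' : shapeCells d lam mu),
      ((c' : Fin d × ℕ).1 : ℕ) = ((c : Fin d × ℕ).1 : ℕ) + n →
      ((c : Fin d × ℕ).2 = (c' : Fin d × ℕ).2) →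
      (∀ r : ℕ, ((c : Fin d × ℕ).1 : ℕ) ≤ r → r ≤ ((c' : Fin d × ℕ).1 : ℕ) →
        ∀ hr : r < d, ((⟨r, hr⟩ : Fin d), (c : Fin d × ℕ).2) ∈ shapeCells d lam mu) →
      (T c : ℕ) + n ≤ (T c' : ℕ) := by
  intro n
  induction n with
  | zero =>
    intro c c' hrow hcolj _
    have : c = c' := by
      apply Subtype.ext
      apply Prod.ext
      · exact Fin.ext (by omega)
      · exact hcolj
    rw [this]
    omega
  | succ n ih =>
    intro c c' hrow hcolj hcells
    have hmid : (((c : Fin d × ℕ).1 : ℕ) + n) < d := by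
      have := (c' : Fin d × ℕ).1.isLt
      omega
    set cmid : shapeCells d lam mu :=
      ⟨(⟨((c : Fin d × ℕ).1 : ℕ) + n, hmid⟩, (c : Fin d × ℕ).2),
        hcells _ (by omega) (by omega) hmid⟩ with hcmid
    have h1 : (T c : ℕ) + n ≤ (T cmid : ℕ) := by
      apply ih c cmid
      · rw [hcmid]
      · rw [hcmid]
      · intro r h1 h2 hr
        apply hcells r h1 _ hr
        rw [hcmid] at h2
        simp only at h2
        omega
    have h2 : T cmid < T c' := by
      apply hcol cmid c'
      · rw [hcmid]
        simp only
        omega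
      · rw [hcmid, hcolj]
    have h2' : (T cmid : ℕ) < (T c' : ℕ) := h2
    omega

lemma memA {p : Fin d × ℕ} (hp : p ∈ shapeCells d α 0) :
    (p.1, ℓ + p.2) ∈ shapeCells d (fun i => ℓ + α i) (fun i => ℓ - β (revP d i)) := by
  have hm := mem_shapeCells.1 hp
  simp only [Pi.zero_apply] at hm
  apply mem_shapeCells.2
  constructor
  · simp only
    omega
  · simp only
    omega

lemma memB {p : Fin d × ℕ}
    (hp : p ∈ shapeCells d (fun _ => ℓ) (fun i => ℓ - β (revP d i))) :
    p ∈ shapeCells d (fun i => ℓ + α i) (fun i => ℓ - β (revP d i)) := by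
  have hm := mem_shapeCells.1 hp
  apply mem_shapeCells.2
  constructor
  · exact hm.1
  · have := hm.2
    omega

lemma memA' {p : Fin d × ℕ}
    (hp : p ∈ shapeCells d (fun i => ℓ + α i) (fun i => ℓ - β (revP d i)))
    (h : ¬ p.2 < ℓ) : (p.1, p.2 - ℓ) ∈ shapeCells d α 0 := by
  have hm := mem_shapeCells.1 hp
  apply mem_shapeCells.2
  simp only [Pi.zero_apply]
  omega

lemma memB' {p : Fin d × ℕ}
    (hp : p ∈ shapeCells d (fun i => ℓ + α i) (fun i => ℓ - β (revP d i)))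
    (h : p.2 < ℓ) : p ∈ shapeCells d (fun _ => ℓ) (fun i => ℓ - β (revP d i)) := by
  have hm := mem_shapeCells.1 hp
  apply mem_shapeCells.2
  exact ⟨hm.1, h⟩

noncomputable def resA
    (T : shapeCells d (fun i => ℓ + α i) (fun i => ℓ - β (revP d i)) → Fin d) :
    shapeCells d α 0 → Fin d := fun c =>
  T ⟨((c : Fin d × ℕ).1, ℓ + (c : Fin d × ℕ).2), memA c.2⟩

noncomputable def resB
    (T : shapeCells d (fun i => ℓ + α i) (fun i => ℓ - β (revP d i)) → Fin d) :
    shapeCells d (fun _ => ℓ) (fun i => ℓ - β (revP d i)) → Fin d := fun c =>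
  T ⟨(c : Fin d × ℕ), memB c.2⟩

noncomputable def glue (T₁ : shapeCells d α 0 → Fin d)
    (T₂ : shapeCells d (fun _ => ℓ) (fun i => ℓ - β (revP d i)) → Fin d) :
    shapeCells d (fun i => ℓ + α i) (fun i => ℓ - β (revP d i)) → Fin d := fun c =>
  if h : (c : Fin d × ℕ).2 < ℓ then T₂ ⟨(c : Fin d × ℕ), memB' c.2 h⟩
  else T₁ ⟨((c : Fin d × ℕ).1, (c : Fin d × ℕ).2 - ℓ), memA' c.2 h⟩

lemma resA_glue (T₁ : shapeCells d α 0 → Fin d)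
    (T₂ : shapeCells d (fun _ => ℓ) (fun i => ℓ - β (revP d i)) → Fin d) :
    resA (glue T₁ T₂) = T₁ := by
  funext c
  obtain ⟨⟨i, j⟩, hc⟩ := c
  unfold resA glue
  simp only
  rw [dif_neg (by omega)]
  apply cell_congr
  apply Prod.ext
  · rfl
  · simp only
    omega

lemma resB_glue (T₁ : shapeCells d α 0 → Fin d)
    (T₂ : shapeCells d (fun _ => ℓ) (fun i => ℓ - β (revP d i)) → Fin d) :
    resB (glue T₁ T₂) = T₂ := by
  funext c
  obtain ⟨⟨i, j⟩, hc⟩ := c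
  have hm := mem_shapeCells.1 hc
  simp only at hm
  unfold resB glue
  simp only
  rw [dif_pos hm.2]

lemma glue_res
    (T : shapeCells d (fun i => ℓ + α i) (fun i => ℓ - β (revP d i)) → Fin d) :
    glue (resA T) (resB T) = T := by
  funext c
  obtain ⟨⟨i, j⟩, hc⟩ := c
  unfold resA resB glue
  simp only
  split
  · rfl
  · apply cell_congr
    apply Prod.ext
    · rfl
    · simp only
      omega

lemma resA_isSSYT
    {T : shapeCells d (fun i => ℓ + α i) (fun i => ℓ - β (revP d i)) → Fin d}
    (hT : IsSSYT d (fun i => ℓ + α i) (fun i => ℓ - β (revP d i)) T) :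
    IsSSYT d α 0 (resA T) := by
  constructor
  · intro c c' hrow hcol
    apply hT.1
    · simp only [hrow]
    · simp only
      omega
  · intro c c' hrow hcol
    apply hT.2
    · simp only
      omega
    · simp only [hcol]

lemma resB_isSSYT
    {T : shapeCells d (fun i => ℓ + α i) (fun i => ℓ - β (revP d i)) → Fin d}
    (hT : IsSSYT d (fun i => ℓ + α i) (fun i => ℓ - β (revP d i)) T) :
    IsSSYT d (fun _ => ℓ) (fun i => ℓ - β (revP d i)) (resB T) := by
  constructor
  · intro c c' hrow hcol
    apply hT.1
    · simp only [hrow]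
    · simp only
      omega
  · intro c c' hrow hcol
    apply hT.2
    · simp only
      omega
    · simp only [hcol]

lemma val_le_row (hβ : Antitone β)
    {T₂ : shapeCells d (fun _ => ℓ) (fun i => ℓ - β (revP d i)) → Fin d}
    (h2 : IsSSYT d (fun _ => ℓ) (fun i => ℓ - β (revP d i)) T₂)
    (x : shapeCells d (fun _ => ℓ) (fun i => ℓ - β (revP d i))) :
    (T₂ x : ℕ) ≤ ((x : Fin d × ℕ).1 : ℕ) := by
  have hm := mem_shapeCells.1 x.2
  have hi := (x : Fin d × ℕ).1.isLt
  have hManti : ∀ r : ℕ, ((x : Fin d × ℕ).1 : ℕ) ≤ r → ∀ hr : r < d,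
      ℓ - β (revP d ⟨r, hr⟩) ≤ (x : Fin d × ℕ).2 := by
    intro r h hr
    have h1 : revP d ⟨r, hr⟩ ≤ revP d (x : Fin d × ℕ).1 := by
      rw [revP_le_iff]
      exact Fin.le_def.mpr h
    have h2 := hβ h1
    have := hm.1
    omega
  have hlast : ((⟨d - 1, by omega⟩ : Fin d), (x : Fin d × ℕ).2)
      ∈ shapeCells d (fun _ => ℓ) (fun i => ℓ - β (revP d i)) := by
    apply mem_shapeCells.2
    exact ⟨hManti (d-1) (by omega) (by omega), hm.2⟩
  have hchain := colStep h2.2 (d - 1 - ((x : Fin d × ℕ).1 : ℕ)) x ⟨_, hlast⟩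
    (by simp only; omega) rfl
    (fun r h1 h2 hr => mem_shapeCells.2 ⟨hManti r h1 hr, hm.2⟩)
  have hv := (T₂ ⟨_, hlast⟩).isLt
  omega

lemma row_le_val (hα : Antitone α)
    {T₁ : shapeCells d α 0 → Fin d} (h1 : IsSSYT d α 0 T₁) (y : shapeCells d α 0) :
    ((y : Fin d × ℕ).1 : ℕ) ≤ (T₁ y : ℕ) := by
  have hm := mem_shapeCells.1 y.2
  simp only [Pi.zero_apply] at hm
  have hi := (y : Fin d × ℕ).1.isLt
  have hcells : ∀ r : ℕ, 0 ≤ r → r ≤ ((y : Fin d × ℕ).1 : ℕ) → ∀ hr : r < d,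
      ((⟨r, hr⟩ : Fin d), (y : Fin d × ℕ).2) ∈ shapeCells d α 0 := by
    intro r _ h hr
    apply mem_shapeCells.2
    refine ⟨Nat.zero_le _, lt_of_lt_of_le hm.2 (hα ?_)⟩
    exact Fin.le_def.mpr h
  have hfirst := hcells 0 le_rfl (Nat.zero_le _) (by omega)
  have hchain := colStep h1.2 ((y : Fin d × ℕ).1 : ℕ) ⟨_, hfirst⟩ y
    (by simp only; omega) rfl
    (fun r hr1 hr2 hr => hcells r hr1 hr2 hr)
  omega

lemma glue_isSSYT (hα : Antitone α) (hβ : Antitone β)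
    {T₁ : shapeCells d α 0 → Fin d}
    {T₂ : shapeCells d (fun _ => ℓ) (fun i => ℓ - β (revP d i)) → Fin d}
    (h1 : IsSSYT d α 0 T₁)
    (h2 : IsSSYT d (fun _ => ℓ) (fun i => ℓ - β (revP d i)) T₂) :
    IsSSYT d (fun i => ℓ + α i) (fun i => ℓ - β (revP d i)) (glue T₁ T₂) := by
  constructor
  · intro c c' hrow hcol
    unfold glue
    by_cases hj' : (c' : Fin d × ℕ).2 < ℓ
    · have hj : (c : Fin d × ℕ).2 < ℓ := by omega
      rw [dif_pos hj, dif_pos hj']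
      apply h2.1
      · simp only [hrow]
      · simp only
        exact hcol
    · by_cases hj : (c : Fin d × ℕ).2 < ℓ
      · rw [dif_pos hj, dif_neg hj']
        rw [Fin.le_def]
        have hL := val_le_row hβ h2 ⟨(c : Fin d × ℕ), memB' c.2 hj⟩
        have hR := row_le_val hα h1 ⟨((c' : Fin d × ℕ).1, (c' : Fin d × ℕ).2 - ℓ), memA' c'.2 hj'⟩
        simp only at hL hR
        rw [hrow] at hL
        omega
      · rw [dif_neg hj, dif_neg hj']
        apply h1.1
        · simp only [hrow]
        · simp only
          omega
  · intro c c' hrow hcol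
    unfold glue
    by_cases hj : (c : Fin d × ℕ).2 < ℓ
    · have hj' : (c' : Fin d × ℕ).2 < ℓ := by omega
      rw [dif_pos hj, dif_pos hj']
      apply h2.2
      · simp only
        exact hrow
      · simp only
        exact hcol
    · have hj' : ¬ (c' : Fin d × ℕ).2 < ℓ := by omega
      rw [dif_neg hj, dif_neg hj']
      apply h1.2
      · simp only
        exact hrow
      · simp only
        omega

lemma prod_split
    (T : shapeCells d (fun i => ℓ + α i) (fun i => ℓ - β (revP d i)) → Fin d) :
    ∏ c : shapeCells d (fun i => ℓ + α i) (fun i => ℓ - β (revP d i)), X (T c)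
      = (∏ c : shapeCells d α 0, (X (resA T c) : MvPolynomial (Fin d) ℤ))
        * ∏ c : shapeCells d (fun _ => ℓ) (fun i => ℓ - β (revP d i)), X (resB T c) := by
  rw [← Finset.prod_filter_mul_prod_filter_not Finset.univ
    (fun c : shapeCells d (fun i => ℓ + α i) (fun i => ℓ - β (revP d i)) =>
      ℓ ≤ (c : Fin d × ℕ).2) (fun c => (X (T c) : MvPolynomial (Fin d) ℤ))]
  congr 1
  · refine Finset.prod_bij'
      (i := fun c hc => (⟨((c : Fin d × ℕ).1, (c : Fin d × ℕ).2 - ℓ),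
        memA' c.2 (by
          simp only [Finset.mem_filter] at hc
          omega)⟩ : shapeCells d α 0))
      (j := fun c _ => ⟨((c : Fin d × ℕ).1, ℓ + (c : Fin d × ℕ).2), memA c.2⟩)
      ?_ ?_ ?_ ?_ ?_
    · intro a ha
      exact Finset.mem_univ _
    · intro a ha
      simp only [Finset.mem_filter]
      exact ⟨Finset.mem_univ _, by omega⟩
    · intro a ha
      simp only [Finset.mem_filter] at ha
      apply Subtype.ext
      apply Prod.ext
      · rfl
      · simp only
        omega
    · intro a ha
      apply Subtype.ext
      apply Prod.ext
      · rfl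
      · simp only
        omega
    · intro a ha
      simp only [Finset.mem_filter] at ha
      apply congrArg
      unfold resA
      apply cell_congr
      apply Prod.ext
      · rfl
      · simp only
        omega
  · refine Finset.prod_bij'
      (i := fun c hc => (⟨(c : Fin d × ℕ),
        memB' c.2 (by
          simp only [Finset.mem_filter] at hc
          omega)⟩ : shapeCells d (fun _ => ℓ) (fun i => ℓ - β (revP d i))))
      (j := fun c _ => ⟨(c : Fin d × ℕ), memB c.2⟩)
      ?_ ?_ ?_ ?_ ?_
    · intro a ha
      exact Finset.mem_univ _
    · intro a ha
      have hm := mem_shapeCells.1 a.2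
      simp only [Finset.mem_filter]
      refine ⟨Finset.mem_univ _, ?_⟩
      omega
    · intro a ha
      apply Subtype.ext
      rfl
    · intro a ha
      apply Subtype.ext
      rfl
    · intro a ha
      apply congrArg
      unfold resB
      apply cell_congr
      rfl

lemma split_skewSchur (hα : Antitone α) (hβ : Antitone β) :
    skewSchur d (fun i => ℓ + α i) (fun i => ℓ - β (revP d i))
      = skewSchur d α 0 * skewSchur d (fun _ => ℓ) (fun i => ℓ - β (revP d i)) := by
  unfold skewSchur
  rw [Finset.sum_mul_sum, ← Finset.sum_product']
  refine Finset.sum_nbij' (i := fun T => (resA T, resB T))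
    (j := fun P => glue P.1 P.2) ?_ ?_ ?_ ?_ ?_
  · intro T hT
    simp only [Finset.mem_filter, Finset.mem_univ, true_and] at hT
    rw [Finset.mem_product]
    constructor <;> simp only [Finset.mem_filter, Finset.mem_univ, true_and]
    · exact resA_isSSYT hT
    · exact resB_isSSYT hT
  · intro P hP
    rw [Finset.mem_product] at hP
    simp only [Finset.mem_filter, Finset.mem_univ, true_and] at hP ⊢
    exact glue_isSSYT hα hβ hP.1 hP.2
  · intro T hT
    exact glue_res T
  · intro P hP
    exact Prod.ext (resA_glue P.1 P.2) (resB_glue P.1 P.2)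
  · intro T hT
    exact prod_split T

end Split

/-- For partitions `α, β` with at most `d` parts and a rectangle
`□ = (ℓ)^d ⊇ β`, one has `s_α · s_β = s_{(□+α)/(□−β^←)}` in `d` variables. -/
theorem stmt3 (d ℓ : ℕ) (α β : Fin d → ℕ) (hα : Antitone α) (hβ : Antitone β)
    (hβℓ : ∀ i, β i ≤ ℓ) :
    skewSchur d α 0 * skewSchur d β 0
      = skewSchur d (fun i => ℓ + α i)
          (fun i => ℓ - β ⟨d - 1 - (i : ℕ), by have := i.isLt; omega⟩) := by
  show skewSchur d α 0 * skewSchur d β 0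
    = skewSchur d (fun i => ℓ + α i) (fun i => ℓ - β (revP d i))
  rw [split_skewSchur hα hβ, rotate_skewSchur hβℓ,
    rename_perm_skewSchur (lam := β) (mu := (0 : Fin d → ℕ)) hβ (fun _ _ _ => le_rfl) (fun r => Nat.zero_le (β r)) (revP d)]
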